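/- Let D = ℝ² \ {(0, y) ∈ ℝ² : y ≥ 0} with the subspace topology. There exists a homeomorphism μ : ℝ² → D such that the map σ : C₀(ℝ², ℂ) → C₀(ℝ², ℂ), which sends f ∈ C₀(ℝ², ℂ) to the extension by zero to ℝ² of the function f ∘ μ⁻¹ : D → ℂ, is a *-homomorphism which is homotopic to the identity map of C₀(ℝ², ℂ); that is, there exists a *-homomorphism H : C₀(ℝ², ℂ) → C([0,1], C₀(ℝ², ℂ)) such that evaluation of H at 0 equals σ and evaluation of H at 1 equals the identity of C₀(ℝ², ℂ). -/

import Mathlib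

open Set
open scoped Classical
open scoped ZeroAtInfty

noncomputable section

namespace Stmt10

/-- The interpolation weight. -/
def rho (t x : ℝ) : ℝ := (1 - t) / (1 + x ^ 2)

lemma one_add_sq_pos (x : ℝ) : (0:ℝ) < 1 + x ^ 2 := by positivity

lemma rho_nonneg {t : ℝ} (ht : t ≤ 1) (x : ℝ) : 0 ≤ rho t x :=
  div_nonneg (by linarith) (one_add_sq_pos x).le

lemma rho_le_one {t : ℝ} (ht : 0 ≤ t) (x : ℝ) : rho t x ≤ 1 := by
  rw [rho, div_le_one (one_add_sq_pos x)]; nlinarith [sq_nonneg x]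

lemma rho_eq_one_iff {t : ℝ} (ht : 0 ≤ t) {x : ℝ} : rho t x = 1 ↔ t = 0 ∧ x = 0 := by
  constructor
  · intro h
    rw [rho, div_eq_one_iff_eq (one_add_sq_pos x).ne'] at h
    constructor <;> nlinarith [sq_nonneg x]
  · rintro ⟨rfl, rfl⟩; norm_num [rho]

lemma continuous_rho₂ {α : Type*} [TopologicalSpace α] {f g : α → ℝ}
    (hf : Continuous f) (hg : Continuous g) : Continuous fun a => rho (f a) (g a) := by
  unfold rho
  exact (continuous_const.sub hf).div (continuous_const.add (hg.pow 2))
    (fun a => by positivity)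

/-- The denominator. -/
def den (t : ℝ) (p : ℝ × ℝ) : ℝ := Real.sqrt (p.2 ^ 2 + (1 - rho t p.1) ^ 2) - p.2

lemma sqrt_ge_self_abs (y δ : ℝ) : |y| ≤ Real.sqrt (y ^ 2 + δ ^ 2) := by
  rw [← Real.sqrt_sq_eq_abs]
  exact Real.sqrt_le_sqrt (by nlinarith [sq_nonneg δ])

lemma den_nonneg (t : ℝ) (p : ℝ × ℝ) : 0 ≤ den t p := by
  have h1 := sqrt_ge_self_abs p.2 (1 - rho t p.1)
  have h2 := le_abs_self p.2
  unfold den; linarith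

lemma den_eq_zero_iff {t : ℝ} {p : ℝ × ℝ} :
    den t p = 0 ↔ rho t p.1 = 1 ∧ 0 ≤ p.2 := by
  unfold den
  rw [sub_eq_zero]
  constructor
  · intro h
    have hy : 0 ≤ p.2 := h ▸ Real.sqrt_nonneg _
    have h2 : Real.sqrt (p.2 ^ 2 + (1 - rho t p.1) ^ 2) ^ 2 = p.2 ^ 2 + (1 - rho t p.1) ^ 2 :=
      Real.sq_sqrt (by positivity)
    rw [h] at h2
    have : rho t p.1 = 1 := by nlinarith [sq_nonneg (1 - rho t p.1)]
    exact ⟨this, hy⟩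
  · rintro ⟨h1, h2⟩
    rw [h1]
    simpa using Real.sqrt_sq h2

lemma continuous_den₂ {α : Type*} [TopologicalSpace α] {f : α → ℝ} {g : α → ℝ × ℝ}
    (hf : Continuous f) (hg : Continuous g) : Continuous fun a => den (f a) (g a) := by
  unfold den
  have h1 : Continuous fun a => (g a).1 := continuous_fst.comp hg
  have h2 : Continuous fun a => (g a).2 := continuous_snd.comp hg
  exact (Real.continuous_sqrt.comp ((h2.pow 2).add
    ((continuous_const.sub (continuous_rho₂ hf h1)).pow 2))).sub h2

/-- The map at time `t` (junk value when `den = 0`). -/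
def Gmap (t : ℝ) (p : ℝ × ℝ) : ℝ × ℝ := (p.1, p.2 + rho t p.1 / den t p)

lemma norm_Gmap_ge {t : ℝ} (ht0 : 0 ≤ t) (ht1 : t ≤ 1) {p : ℝ × ℝ} (hd : den t p ≠ 0) :
    ‖p‖ - 1 ≤ ‖Gmap t p‖ := by
  have hdpos : 0 < den t p := lt_of_le_of_ne (den_nonneg t p) (Ne.symm hd)
  have hρ0 : 0 ≤ rho t p.1 := rho_nonneg ht1 _
  have hρ1 : rho t p.1 ≤ 1 := rho_le_one ht0 _
  have hq : 0 ≤ rho t p.1 / den t p := div_nonneg hρ0 hdpos.le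
  set y := p.2 with hy
  set q := rho t p.1 / den t p with hqdef
  have key : |y| - 1 ≤ |y + q| := by
    rcases le_or_gt 0 y with h0 | h0
    · have : y + q = |y + q| := (abs_of_nonneg (by linarith)).symm
      rw [← this]
      have : |y| = y := abs_of_nonneg h0
      linarith
    rcases le_or_gt (-1) y with h1 | h1
    · have : |y| ≤ 1 := by rw [abs_of_neg h0]; linarith
      linarith [abs_nonneg (y + q)]
    · -- y < -1
      have hden_ge : -2 * y ≤ den t p := by
        have := sqrt_ge_self_abs y (1 - rho t p.1)
        have : -y ≤ Real.sqrt (y ^ 2 + (1 - rho t p.1) ^ 2) := le_trans (neg_le_abs y) this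
        unfold den; linarith
      have hq2 : q ≤ 1 / 2 := by
        rw [hqdef]
        have h2y : (2:ℝ) ≤ -2 * y := by linarith
        calc rho t p.1 / den t p ≤ 1 / den t p := by
              gcongr
            _ ≤ 1 / 2 := by
              apply one_div_le_one_div_of_le (by norm_num)
              linarith
      have hyq : y + q < 0 := by linarith
      rw [abs_of_neg hyq, abs_of_neg h0]
      linarith
  rw [Prod.norm_def, Prod.norm_def, Real.norm_eq_abs, Real.norm_eq_abs, Real.norm_eq_abs,
    Real.norm_eq_abs]
  simp only [Gmap]
  rcases max_cases |p.1| |y| with ⟨h, _⟩ | ⟨h, _⟩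
  · rw [h]
    exact le_trans (by linarith [le_max_left |p.1| |y + q|]) (le_refl _) |>.trans
      (le_max_left _ _) |>.trans_eq rfl
  · rw [h]
    exact le_trans key (le_max_right _ _)




/-- backward kernel -/
def gker (r y : ℝ) : ℝ := y + r / (Real.sqrt (y ^ 2 + (1 - r) ^ 2) - y)

/-- forward kernel -/
def mker (r Y : ℝ) : ℝ := Y - r * (Y + Real.sqrt (Y ^ 2 + 1 + r ^ 2)) / (1 + r ^ 2)

lemma mlem1 {r : ℝ} (hr : 0 < r) (hr1 : r ≤ 1) (Y : ℝ) : gker r (mker r Y) = Y := by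
  have h1r : (0:ℝ) < 1 + r ^ 2 := by positivity
  obtain ⟨S, hSdef⟩ : ∃ S, Real.sqrt (Y ^ 2 + 1 + r ^ 2) = S := ⟨_, rfl⟩
  have hS2 : S ^ 2 = Y ^ 2 + 1 + r ^ 2 := by rw [← hSdef]; exact Real.sq_sqrt (by positivity)
  have hS0 : 0 ≤ S := by rw [← hSdef]; exact Real.sqrt_nonneg _
  have hSY : |Y| < S := by
    have h := Real.sqrt_lt_sqrt (sq_nonneg Y) (show Y ^ 2 < Y ^ 2 + 1 + r ^ 2 by nlinarith)
    rwa [Real.sqrt_sq_eq_abs, hSdef] at h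
  have hYS : 0 < Y + S := by have := neg_abs_le Y; linarith
  have hYS' : 0 < S - Y := by have := le_abs_self Y; linarith
  obtain ⟨u, hudef⟩ : ∃ u, r * (Y + S) / (1 + r ^ 2) = u := ⟨_, rfl⟩
  have hu : 0 < u := by rw [← hudef]; positivity
  have hum : u * (1 + r ^ 2) = r * (Y + S) := by rw [← hudef]; field_simp
  have hquad : (1 + r ^ 2) * u ^ 2 = 2 * r * Y * u + r ^ 2 := by
    have h2 : (u * (1 + r ^ 2)) ^ 2 = (r * (Y + S)) ^ 2 := by rw [hum]
    have h4 : (1 + r ^ 2) * ((1 + r ^ 2) * u ^ 2) = (1 + r ^ 2) * (2 * r * Y * u + r ^ 2) := by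
      calc (1 + r ^ 2) * ((1 + r ^ 2) * u ^ 2) = (u * (1 + r ^ 2)) ^ 2 := by ring
        _ = (r * (Y + S)) ^ 2 := h2
        _ = r ^ 2 * (Y ^ 2 + 2 * Y * S + S ^ 2) := by ring
        _ = r ^ 2 * (2 * Y ^ 2 + 2 * Y * S + 1 + r ^ 2) := by rw [hS2]; ring
        _ = 2 * r * Y * (r * (Y + S)) + r ^ 2 * (1 + r ^ 2) := by ring
        _ = 2 * r * Y * (u * (1 + r ^ 2)) + r ^ 2 * (1 + r ^ 2) := by rw [hum]
        _ = (1 + r ^ 2) * (2 * r * Y * u + r ^ 2) := by ring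
    exact mul_left_cancel₀ h1r.ne' h4
  have hm : mker r Y = Y - u := by simp only [mker]; rw [hSdef, hudef]
  have hexp : ((Y - u) * u + r) * (1 + r ^ 2) = Y * u * (1 - r) ^ 2 + r * (1 - r + r ^ 2) := by
    linear_combination (-1 : ℝ) * hquad
  have hsign : 0 ≤ (Y - u) * u + r := by
    rcases le_or_gt 0 Y with hY | hY
    · have h7 : 0 ≤ Y * u * (1 - r) ^ 2 + r * (1 - r + r ^ 2) := by
        have := mul_nonneg (mul_nonneg hY hu.le) (sq_nonneg (1 - r))
        nlinarith
      nlinarith [hexp, h7, h1r]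
    · have h5 : Y * (Y + S) * (S - Y) = Y * (1 + r ^ 2) := by nlinarith [hS2]
      have hb : -((1 + r ^ 2) / 2) ≤ Y * (Y + S) := by
        nlinarith [h5, hYS, hYS', h1r, mul_pos h1r hYS]
      have hYu : Y * u * (1 + r ^ 2) = r * (Y * (Y + S)) := by
        calc Y * u * (1 + r ^ 2) = Y * (u * (1 + r ^ 2)) := by ring
          _ = Y * (r * (Y + S)) := by rw [hum]
          _ = r * (Y * (Y + S)) := by ring
      have hYu2 : -(r / 2) ≤ Y * u := by nlinarith [hYu, hb, hr, h1r]
      have h7 : 0 ≤ Y * u * (1 - r) ^ 2 + r * (1 - r + r ^ 2) := by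
        have h8 := mul_le_mul_of_nonneg_right hYu2 (sq_nonneg (1 - r))
        have h9 : (0:ℝ) ≤ r * (1 + r ^ 2) / 2 := by positivity
        have h10 : r * (1 - r + r ^ 2) = r / 2 * (1 - r) ^ 2 + r * (1 + r ^ 2) / 2 := by ring
        linarith [h8, h9, h10]
      nlinarith [hexp, h7, h1r]
  have hRHS : 0 ≤ (Y - u) + r / u := by
    have h : (Y - u) + r / u = ((Y - u) * u + r) / u := by field_simp
    rw [h]; positivity
  have h6 : 2 * (Y - u) * r * u + r ^ 2 = (1 - r) ^ 2 * u ^ 2 := by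
    linear_combination (-1 : ℝ) * hquad
  have hsq : (Y - u) ^ 2 + (1 - r) ^ 2 = ((Y - u) + r / u) ^ 2 := by
    have h : ((Y - u) + r / u) ^ 2 = (Y - u) ^ 2 + (2 * (Y - u) * r * u + r ^ 2) / u ^ 2 := by
      field_simp; ring
    rw [h, h6]
    field_simp
  have hkey : Real.sqrt ((Y - u) ^ 2 + (1 - r) ^ 2) = (Y - u) + r / u := by
    rw [hsq, Real.sqrt_sq hRHS]
  rw [hm]; simp only [gker]; rw [hkey]
  have h9 : Y - u + r / u - (Y - u) = r / u := by ring
  rw [h9]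
  have h10 : r / (r / u) = u := by
    field_simp
  rw [h10]; ring

lemma mlem2 {r y : ℝ} (hr : 0 < r) (hr1 : r ≤ 1)
    (hd : Real.sqrt (y ^ 2 + (1 - r) ^ 2) - y ≠ 0) : mker r (gker r y) = y := by
  have h1r : (0:ℝ) < 1 + r ^ 2 := by positivity
  obtain ⟨s, hsdef⟩ : ∃ s, Real.sqrt (y ^ 2 + (1 - r) ^ 2) = s := ⟨_, rfl⟩
  rw [hsdef] at hd
  have hs2 : s ^ 2 = y ^ 2 + (1 - r) ^ 2 := by rw [← hsdef]; exact Real.sq_sqrt (by positivity)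
  have hs0 : 0 ≤ s := by rw [← hsdef]; exact Real.sqrt_nonneg _
  have hsy : |y| ≤ s := by
    rw [← hsdef, ← Real.sqrt_sq_eq_abs]
    exact Real.sqrt_le_sqrt (by nlinarith [sq_nonneg (1 - r)])
  have hdd : 0 < s - y := by
    rcases lt_or_eq_of_le (show y ≤ s from (le_abs_self y).trans hsy) with h | h
    · linarith
    · exact absurd (by rw [← h]; ring) hd
  obtain ⟨Y, hYdef⟩ : ∃ Y, y + r / (s - y) = Y := ⟨_, rfl⟩
  have hgk : gker r y = Y := by simp only [gker]; rw [hsdef, hYdef]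
  have hYdd : Y * (s - y) = y * (s - y) + r := by
    rw [← hYdef]
    have : (y + r / (s - y)) * (s - y) = y * (s - y) + r / (s - y) * (s - y) := by ring
    rw [this, div_mul_cancel₀ _ hd]
  have hval : ((1 + r ^ 2) / (s - y) - Y) ^ 2 = Y ^ 2 + 1 + r ^ 2 := by
    have h8 : (1 + r ^ 2) / (s - y) - Y = ((1 + r ^ 2) - (y * (s - y) + r)) / (s - y) := by
      rw [← hYdd]
      rw [sub_div, mul_div_assoc, div_self hd, mul_one]
    rw [h8, div_pow, eq_comm, eq_div_iff (by positivity : ((s - y) ^ 2 : ℝ) ≠ 0)]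
    have hYsq : Y ^ 2 * (s - y) ^ 2 = (y * (s - y) + r) ^ 2 := by
      rw [← mul_pow, hYdd]
    nlinarith [hYsq, hs2]
  have h9 : y * (s - y) ≤ (1 - r) ^ 2 := by
    rcases le_or_gt y 0 with hy | hy
    · nlinarith [mul_nonpos_of_nonpos_of_nonneg hy hdd.le, sq_nonneg (1 - r)]
    · have hsy2 : 0 < s + y := by linarith
      nlinarith [hs2, hs0, hsy2, sq_nonneg (1 - r), mul_pos hy hdd]
  have hpos : 0 ≤ (1 + r ^ 2) / (s - y) - Y := by
    have hc : (1 + r ^ 2) / (s - y) * (s - y) = 1 + r ^ 2 := div_mul_cancel₀ _ hd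
    have h8 : ((1 + r ^ 2) / (s - y) - Y) * (s - y) = (1 + r ^ 2) - (y * (s - y) + r) := by
      calc ((1 + r ^ 2) / (s - y) - Y) * (s - y)
          = (1 + r ^ 2) / (s - y) * (s - y) - Y * (s - y) := by ring
        _ = (1 + r ^ 2) - (y * (s - y) + r) := by rw [hc, hYdd]
    nlinarith [h8, h9, hdd, hr, sq_nonneg r]
  have hS' : Real.sqrt (Y ^ 2 + 1 + r ^ 2) = (1 + r ^ 2) / (s - y) - Y := by
    rw [← hval, Real.sqrt_sq hpos]
  rw [hgk]; simp only [mker]; rw [hS']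
  have h11 : Y + ((1 + r ^ 2) / (s - y) - Y) = (1 + r ^ 2) / (s - y) := by ring
  rw [h11]
  rw [← hYdef]
  field_simp
  ring

lemma mlem3 (Y : ℝ) : mker 1 Y < 0 := by
  have harg : Y ^ 2 + 1 + 1 ^ 2 = Y ^ 2 + 2 := by norm_num; ring
  have hm : mker 1 Y = (Y - Real.sqrt (Y ^ 2 + 2)) / 2 := by
    simp only [mker, harg]; ring
  have h2 : Y < Real.sqrt (Y ^ 2 + 2) := by
    rcases le_or_gt Y 0 with h | h
    · have : 0 < Real.sqrt (Y ^ 2 + 2) := Real.sqrt_pos.mpr (by positivity)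
      linarith
    · have hY : Y = Real.sqrt (Y ^ 2) := by rw [Real.sqrt_sq h.le]
      nth_rewrite 1 [hY]
      exact Real.sqrt_lt_sqrt (by positivity) (by nlinarith)
  rw [hm]
  linarith


lemma Gmap_eq_gker (t : ℝ) (p : ℝ × ℝ) : Gmap t p = (p.1, gker (rho t p.1) p.2) := rfl

lemma den_eq (t : ℝ) (p : ℝ × ℝ) :
    den t p = Real.sqrt (p.2 ^ 2 + (1 - rho t p.1) ^ 2) - p.2 := rfl

lemma rho_zero_pos (x : ℝ) : 0 < rho 0 x := by
  rw [rho]; positivity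

lemma rho_zero_zero : rho 0 0 = 1 := by norm_num [rho]

/-- The slit plane. -/
def Dset : Set (ℝ × ℝ) := {p : ℝ × ℝ | ¬(p.1 = 0 ∧ 0 ≤ p.2)}

lemma den_zero_ne_zero_of_mem {p : ℝ × ℝ} (hp : p ∈ Dset) : den 0 p ≠ 0 := by
  intro h
  obtain ⟨h1, h2⟩ := den_eq_zero_iff.mp h
  obtain ⟨-, hx⟩ := (rho_eq_one_iff le_rfl).mp h1
  exact hp ⟨hx, h2⟩

lemma muFun_mem (p : ℝ × ℝ) : (p.1, mker (rho 0 p.1) p.2) ∈ Dset := by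
  rintro ⟨hx, hy⟩
  rw [hx, rho_zero_zero] at hy
  exact absurd hy (not_le.mpr (mlem3 p.2))

lemma continuous_muFun : Continuous fun p : ℝ × ℝ => (p.1, mker (rho 0 p.1) p.2) := by
  apply continuous_fst.prodMk
  have hrho : Continuous fun p : ℝ × ℝ => rho 0 p.1 :=
    continuous_rho₂ continuous_const continuous_fst
  simp only [mker]
  apply Continuous.sub continuous_snd
  apply Continuous.div
  · apply hrho.mul
    apply continuous_snd.add
    apply Real.continuous_sqrt.comp
    fun_prop
  · fun_prop
  · intro p
    have := rho_zero_pos p.1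
    positivity

lemma continuousOn_nuFun : ContinuousOn (fun p : ℝ × ℝ => Gmap 0 p) Dset := by
  have hden : Continuous fun p : ℝ × ℝ => den 0 p :=
    continuous_den₂ continuous_const continuous_id
  have hrho : Continuous fun p : ℝ × ℝ => rho 0 p.1 :=
    continuous_rho₂ continuous_const continuous_fst
  intro p hp
  apply ContinuousAt.continuousWithinAt
  simp only [Gmap]
  exact (continuous_fst.continuousAt).prodMk
    ((continuous_snd.continuousAt).add
      ((hrho.continuousAt).div (hden.continuousAt) (den_zero_ne_zero_of_mem hp)))

/-- The homeomorphism `ℝ² ≃ D`. -/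
def mu : (ℝ × ℝ) ≃ₜ Dset where
  toFun p := ⟨(p.1, mker (rho 0 p.1) p.2), muFun_mem p⟩
  invFun q := Gmap 0 q.1
  left_inv p := by
    have h := mlem1 (rho_zero_pos p.1) (rho_le_one le_rfl p.1) p.2
    exact Prod.ext rfl h
  right_inv q := by
    have hd : den 0 q.1 ≠ 0 := den_zero_ne_zero_of_mem q.2
    have h := mlem2 (rho_zero_pos q.1.1) (rho_le_one le_rfl q.1.1) (hd := hd)
    exact Subtype.ext (Prod.ext rfl h)
  continuous_toFun := continuous_muFun.subtype_mk _
  continuous_invFun := continuousOn_nuFun.restrict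



open Filter Metric Topology

/-- The homotopy as a map on `[0,1] × (ℝ²)⁺`. -/
def Fbar (q : ↥(Icc (0:ℝ) 1) × OnePoint (ℝ × ℝ)) : OnePoint (ℝ × ℝ) :=
  q.2.elim OnePoint.infty fun p =>
    if den q.1.1 p = 0 then OnePoint.infty else OnePoint.some (Gmap q.1.1 p)

lemma Fbar_infty (t : ↥(Icc (0:ℝ) 1)) : Fbar (t, OnePoint.infty) = OnePoint.infty := rfl

lemma Fbar_coe (t : ↥(Icc (0:ℝ) 1)) (p : ℝ × ℝ) :
    Fbar (t, OnePoint.some p) =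
      if den t.1 p = 0 then OnePoint.infty else OnePoint.some (Gmap t.1 p) := rfl

lemma continuous_den' : Continuous fun q : ↥(Icc (0:ℝ) 1) × (ℝ × ℝ) => den q.1.1 q.2 :=
  continuous_den₂ (continuous_subtype_val.comp continuous_fst) continuous_snd

def emb (q : ↥(Icc (0:ℝ) 1) × (ℝ × ℝ)) : ↥(Icc (0:ℝ) 1) × OnePoint (ℝ × ℝ) :=
  (q.1, OnePoint.some q.2)

lemma emb_isOpenEmbedding : IsOpenEmbedding emb :=
  IsOpenEmbedding.id.prodMap OnePoint.isOpenEmbedding_coe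

lemma norm_snd_le (p : ℝ × ℝ) : |p.2| ≤ ‖p‖ := by
  rw [Prod.norm_def, Real.norm_eq_abs, Real.norm_eq_abs]
  exact le_max_right _ _

lemma fbar_cont : Continuous Fbar := by
  rw [continuous_iff_continuousAt]
  rintro ⟨t₀, w₀⟩
  induction w₀ using OnePoint.rec with
  | infty =>
    unfold ContinuousAt
    rw [Fbar_infty, (OnePoint.hasBasis_nhds_infty (X := ℝ × ℝ)).tendsto_right_iff]
    rintro s ⟨hscl, hsc⟩
    obtain ⟨M, hM0, hM⟩ := hsc.isBounded.subset_closedBall_lt 0 0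
    have hV : ((fun x : ℝ × ℝ => (x : OnePoint (ℝ × ℝ))) ''
          (Metric.closedBall (0:ℝ×ℝ) (M + 1))ᶜ ∪ {OnePoint.infty})
        ∈ 𝓝 (OnePoint.infty : OnePoint (ℝ × ℝ)) :=
      (OnePoint.hasBasis_nhds_infty (X := ℝ × ℝ)).mem_of_mem
        ⟨Metric.isClosed_closedBall, isCompact_closedBall _ _⟩
    have hev : ∀ᶠ q : ↥(Icc (0:ℝ) 1) × OnePoint (ℝ×ℝ) in 𝓝 (t₀, OnePoint.infty),
        q.2 ∈ ((fun x : ℝ × ℝ => (x : OnePoint (ℝ × ℝ))) ''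
          (Metric.closedBall (0:ℝ×ℝ) (M + 1))ᶜ ∪ {OnePoint.infty}) :=
      continuous_snd.continuousAt (x := (t₀, OnePoint.infty)) hV
    filter_upwards [hev] with q hq
    rcases hq with ⟨p, hp, hpe⟩ | hq
    · obtain ⟨t, w⟩ := q
      simp only at hpe
      rw [← hpe]
      rw [Fbar_coe]
      by_cases hd : den t.1 p = 0
      · rw [if_pos hd]; right; rfl
      · rw [if_neg hd]; left
        refine ⟨Gmap t.1 p, fun hmem => ?_, rfl⟩
        have h1 : ‖Gmap t.1 p‖ ≤ M := by
          have := hM hmem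
          rwa [mem_closedBall_zero_iff] at this
        have h2 : M + 1 < ‖p‖ := by
          have := hp
          simp only [mem_compl_iff, mem_closedBall_zero_iff, not_le] at this
          exact this
        have h3 := norm_Gmap_ge t.2.1 t.2.2 hd
        linarith
    · obtain ⟨t, w⟩ := q
      simp only [mem_singleton_iff] at hq
      rw [hq]
      right; rfl
  | coe p₀ =>
    by_cases hd : den t₀.1 p₀ = 0
    · -- blow-up case
      obtain ⟨hρ, hy⟩ := den_eq_zero_iff.mp hd
      unfold ContinuousAt
      rw [Fbar_coe, if_pos hd, (OnePoint.hasBasis_nhds_infty (X := ℝ × ℝ)).tendsto_right_iff]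
      rintro s ⟨hscl, hsc⟩
      obtain ⟨M, hM0, hM⟩ := hsc.isBounded.subset_closedBall_lt 0 0
      have hC : (0:ℝ) < M + |p₀.2| + 2 := by positivity
      set ε : ℝ := 1 / (2 * (M + |p₀.2| + 2)) with hεdef
      have hε : 0 < ε := by positivity
      have hmap : 𝓝 ((t₀, OnePoint.some p₀) : ↥(Icc (0:ℝ) 1) × OnePoint (ℝ×ℝ))
          = map emb (𝓝 (t₀, p₀)) := (emb_isOpenEmbedding.map_nhds_eq (t₀, p₀)).symm
      rw [hmap, eventually_map]
      have h1 : ∀ᶠ q : ↥(Icc (0:ℝ) 1) × (ℝ×ℝ) in 𝓝 (t₀, p₀), den q.1.1 q.2 < ε := by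
        have htd : Tendsto (fun q : ↥(Icc (0:ℝ) 1) × (ℝ×ℝ) => den q.1.1 q.2)
            (𝓝 (t₀, p₀)) (𝓝 0) := by
          have := continuous_den'.continuousAt (x := (t₀, p₀))
          rwa [ContinuousAt, hd] at this
        exact htd.eventually_lt_const hε
      have h2 : ∀ᶠ q : ↥(Icc (0:ℝ) 1) × (ℝ×ℝ) in 𝓝 (t₀, p₀), 1/2 < rho q.1.1 q.2.1 := by
        have hc : Continuous fun q : ↥(Icc (0:ℝ) 1) × (ℝ×ℝ) => rho q.1.1 q.2.1 :=
          continuous_rho₂ (continuous_subtype_val.comp continuous_fst)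
            (continuous_fst.comp continuous_snd)
        have htd : Tendsto (fun q : ↥(Icc (0:ℝ) 1) × (ℝ×ℝ) => rho q.1.1 q.2.1)
            (𝓝 (t₀, p₀)) (𝓝 1) := by
          have := hc.continuousAt (x := (t₀, p₀))
          rwa [ContinuousAt, hρ] at this
        exact htd.eventually_const_lt (by norm_num)
      have h3 : ∀ᶠ q : ↥(Icc (0:ℝ) 1) × (ℝ×ℝ) in 𝓝 (t₀, p₀), p₀.2 - 1 < q.2.2 := by
        have hc : Continuous fun q : ↥(Icc (0:ℝ) 1) × (ℝ×ℝ) => q.2.2 :=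
          continuous_snd.comp continuous_snd
        exact (hc.continuousAt (x := (t₀, p₀))).eventually_const_lt (by linarith)
      filter_upwards [h1, h2, h3] with q hq1 hq2 hq3
      show Fbar (emb q) ∈ _
      rw [show emb q = (q.1, OnePoint.some q.2) from rfl, Fbar_coe]
      by_cases hdq : den q.1.1 q.2 = 0
      · rw [if_pos hdq]; right; rfl
      · rw [if_neg hdq]; left
        have hdpos : 0 < den q.1.1 q.2 := lt_of_le_of_ne (den_nonneg _ _) (Ne.symm hdq)
        refine ⟨Gmap q.1.1 q.2, fun hmem => ?_, rfl⟩
        have hnorm : ‖Gmap q.1.1 q.2‖ ≤ M := by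
          have := hM hmem; rwa [mem_closedBall_zero_iff] at this
        have hG2 : M + 1 ≤ (Gmap q.1.1 q.2).2 := by
          have hfrac : M + |p₀.2| + 2 ≤ rho q.1.1 q.2.1 / den q.1.1 q.2 := by
            have e1 : M + |p₀.2| + 2 = (1/2) / ε := by
              rw [hεdef]; field_simp
            rw [e1]
            apply div_le_div₀ (by linarith) (by linarith) hdpos hq1.le
          have : (Gmap q.1.1 q.2).2 = q.2.2 + rho q.1.1 q.2.1 / den q.1.1 q.2 := rfl
          rw [this]
          have habs : -|p₀.2| ≤ p₀.2 := neg_abs_le _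
          linarith
        have := (norm_snd_le (Gmap q.1.1 q.2)).trans hnorm
        have := le_abs_self (Gmap q.1.1 q.2).2
        linarith
    · -- regular case
      have key : ContinuousAt (Fbar ∘ emb) (t₀, p₀) := by
        have hev : ∀ᶠ q : ↥(Icc (0:ℝ) 1) × (ℝ×ℝ) in 𝓝 (t₀, p₀), den q.1.1 q.2 ≠ 0 :=
          continuous_den'.continuousAt.eventually_ne hd
        have hG : ContinuousAt (fun q : ↥(Icc (0:ℝ) 1) × (ℝ×ℝ) =>
            OnePoint.some (Gmap q.1.1 q.2)) (t₀, p₀) := by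
          apply (OnePoint.continuous_coe.continuousAt).comp
          have c1 : ContinuousAt (fun q : ↥(Icc (0:ℝ) 1) × (ℝ×ℝ) => q.2.1) (t₀, p₀) :=
            (continuous_fst.comp continuous_snd).continuousAt
          have c2 : ContinuousAt (fun q : ↥(Icc (0:ℝ) 1) × (ℝ×ℝ) => q.2.2) (t₀, p₀) :=
            (continuous_snd.comp continuous_snd).continuousAt
          have crho : ContinuousAt (fun q : ↥(Icc (0:ℝ) 1) × (ℝ×ℝ) =>
              rho q.1.1 q.2.1) (t₀, p₀) :=
            (continuous_rho₂ (continuous_subtype_val.comp continuous_fst)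
              (continuous_fst.comp continuous_snd)).continuousAt
          exact c1.prodMk (c2.add (crho.div continuous_den'.continuousAt hd))
        apply hG.congr
        filter_upwards [hev] with q hq
        show OnePoint.some (Gmap q.1.1 q.2) = (Fbar ∘ emb) q
        have : (Fbar ∘ emb) q = OnePoint.some (Gmap q.1.1 q.2) := by
          show Fbar (q.1, OnePoint.some q.2) = _
          rw [Fbar_coe, if_neg hq]
        rw [this]
      exact emb_isOpenEmbedding.continuousAt_iff.mp key

def FbarC : C(↥(Icc (0:ℝ) 1) × OnePoint (ℝ × ℝ), OnePoint (ℝ × ℝ)) := ⟨Fbar, fbar_cont⟩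

/-- Extension of a `C₀` function to the one-point compactification. -/
def fext (f : C₀(ℝ × ℝ, ℂ)) : C(OnePoint (ℝ × ℝ), ℂ) :=
  OnePoint.continuousMapMk f.toContinuousMap 0
    (by rw [Filter.coclosedCompact_eq_cocompact]; exact f.zero_at_infty')

lemma fext_apply (f : C₀(ℝ × ℝ, ℂ)) (w : OnePoint (ℝ × ℝ)) : fext f w = w.elim 0 f := rfl

/-- Restriction back to `C₀`. -/
def Res (g : C(OnePoint (ℝ × ℝ), ℂ)) : C₀(ℝ × ℝ, ℂ) where
  toFun p := g (OnePoint.some p) - g OnePoint.infty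
  continuous_toFun := (g.continuous.comp OnePoint.continuous_coe).sub continuous_const
  zero_at_infty' := by
    have h : Tendsto (fun p : ℝ × ℝ => g (OnePoint.some p)) (cocompact _)
        (𝓝 (g OnePoint.infty)) := by
      have := OnePoint.continuousAt_infty'.mp (g.continuous.continuousAt (x := OnePoint.infty))
      rwa [Filter.coclosedCompact_eq_cocompact] at this
    simpa using h.sub (tendsto_const_nhds (x := g OnePoint.infty))

lemma lipschitz_Res : LipschitzWith 2 Res := by
  apply LipschitzWith.of_dist_le_mul
  intro g₁ g₂
  rw [← ZeroAtInftyContinuousMap.dist_toBCF_eq_dist]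
  refine (BoundedContinuousFunction.dist_le (by positivity)).mpr fun p => ?_
  have e1 : (Res g₁).toBCF p = g₁ (OnePoint.some p) - g₁ OnePoint.infty := rfl
  have e2 : (Res g₂).toBCF p = g₂ (OnePoint.some p) - g₂ OnePoint.infty := rfl
  rw [e1, e2]
  calc dist (g₁ (OnePoint.some p) - g₁ OnePoint.infty)
        (g₂ (OnePoint.some p) - g₂ OnePoint.infty)
      ≤ dist (g₁ (OnePoint.some p)) (g₂ (OnePoint.some p))
        + dist (g₁ OnePoint.infty) (g₂ OnePoint.infty) := dist_sub_sub_le _ _ _ _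
    _ ≤ dist g₁ g₂ + dist g₁ g₂ :=
        add_le_add (ContinuousMap.dist_apply_le_dist _) (ContinuousMap.dist_apply_le_dist _)
    _ = 2 * dist g₁ g₂ := by push_cast; ring

/-- The homotopy, as a family of `C₀` functions. -/
def Hfun (f : C₀(ℝ × ℝ, ℂ)) : C(↥(Icc (0:ℝ) 1), C₀(ℝ × ℝ, ℂ)) :=
  ⟨fun t => Res (ContinuousMap.curry ((fext f).comp FbarC) t),
    lipschitz_Res.continuous.comp (ContinuousMap.curry ((fext f).comp FbarC)).continuous⟩

lemma Hfun_apply (f : C₀(ℝ × ℝ, ℂ)) (t : ↥(Icc (0:ℝ) 1)) (z : ℝ × ℝ) :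
    Hfun f t z = (Fbar (t, OnePoint.some z)).elim 0 f := by
  show fext f (Fbar (t, OnePoint.some z)) - fext f (Fbar (t, OnePoint.infty)) = _
  rw [Fbar_infty, fext_apply, fext_apply]
  simp

/-- The homotopy as a star homomorphism. -/
def Hhom : C₀(ℝ × ℝ, ℂ) →⋆ₙₐ[ℂ] C(↥(Icc (0:ℝ) 1), C₀(ℝ × ℝ, ℂ)) where
  toFun := Hfun
  map_smul' c f := by
    ext t z
    simp only [Hfun_apply, ContinuousMap.coe_smul, Pi.smul_apply,
      ZeroAtInftyContinuousMap.coe_smul]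
    induction (Fbar (t, OnePoint.some z)) using OnePoint.rec with
    | infty => simp
    | coe p => simp
  map_zero' := by
    ext t z
    simp only [Hfun_apply, ContinuousMap.coe_zero, Pi.zero_apply,
      ZeroAtInftyContinuousMap.coe_zero]
    induction (Fbar (t, OnePoint.some z)) using OnePoint.rec with
    | infty => simp
    | coe p => simp
  map_add' f g := by
    ext t z
    simp only [Hfun_apply, ContinuousMap.coe_add, Pi.add_apply,
      ZeroAtInftyContinuousMap.coe_add]
    induction (Fbar (t, OnePoint.some z)) using OnePoint.rec with
    | infty => simp
    | coe p => simp
  map_mul' f g := by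
    ext t z
    simp only [Hfun_apply, ContinuousMap.coe_mul, Pi.mul_apply,
      ZeroAtInftyContinuousMap.coe_mul]
    induction (Fbar (t, OnePoint.some z)) using OnePoint.rec with
    | infty => simp
    | coe p => simp
  map_star' f := by
    ext t z
    simp only [Hfun_apply, ContinuousMap.coe_star, Pi.star_apply,
      ZeroAtInftyContinuousMap.coe_star]
    induction (Fbar (t, OnePoint.some z)) using OnePoint.rec with
    | infty => simp
    | coe p => simp

/-- Evaluation at a point of `[0,1]`, as a star homomorphism. -/
def evalHom (t : ↥(Icc (0:ℝ) 1)) :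
    C(↥(Icc (0:ℝ) 1), C₀(ℝ × ℝ, ℂ)) →⋆ₙₐ[ℂ] C₀(ℝ × ℝ, ℂ) where
  toFun g := g t
  map_smul' c g := rfl
  map_zero' := rfl
  map_add' g₁ g₂ := rfl
  map_mul' g₁ g₂ := rfl
  map_star' g := rfl

end Stmt10

open Stmt10 in
/-- Let `D = ℝ² \ {(0,y) : y ≥ 0}`. There is a homeomorphism `μ : ℝ² → D` such
that the *-homomorphism `σ : C₀(ℝ²) → C₀(ℝ²)` sending `f` to the extension by zero of
`f ∘ μ⁻¹` is homotopic to the identity, via a *-homomorphism `H : C₀(ℝ²) → C([0,1], C₀(ℝ²))`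
whose evaluations at `0` and `1` are `σ` and the identity respectively. -/
theorem stmt_10 (D : Set (ℝ × ℝ)) (hD : D = {p : ℝ × ℝ | ¬(p.1 = 0 ∧ 0 ≤ p.2)}) :
    ∃ (μ : (ℝ × ℝ) ≃ₜ D) (σ : C₀(ℝ × ℝ, ℂ) →⋆ₙₐ[ℂ] C₀(ℝ × ℝ, ℂ)),
      (∀ (f : C₀(ℝ × ℝ, ℂ)) (z : ℝ × ℝ),
        σ f z = if h : z ∈ D then f (μ.symm ⟨z, h⟩) else 0) ∧
      ∃ H : C₀(ℝ × ℝ, ℂ) →⋆ₙₐ[ℂ] C(Icc (0:ℝ) 1, C₀(ℝ × ℝ, ℂ)),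
        (∀ f : C₀(ℝ × ℝ, ℂ), H f ⟨0, by norm_num⟩ = σ f) ∧
        (∀ f : C₀(ℝ × ℝ, ℂ), H f ⟨1, by norm_num⟩ = f) := by
  subst hD
  refine ⟨mu, (evalHom ⟨0, by norm_num⟩).comp Hhom, ?_, Hhom, ?_, ?_⟩
  · intro f z
    show Hfun f ⟨0, by norm_num⟩ z = _
    rw [Hfun_apply]
    by_cases h : z ∈ {p : ℝ × ℝ | ¬(p.1 = 0 ∧ 0 ≤ p.2)}
    · rw [dif_pos h]
      have hd : den 0 z ≠ 0 := den_zero_ne_zero_of_mem (h : z ∈ Dset)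
      have he : Fbar ((⟨0, by norm_num⟩ : ↥(Icc (0:ℝ) 1)), OnePoint.some z)
          = OnePoint.some (Gmap 0 z) := by
        rw [Fbar_coe, if_neg hd]
      rw [he]
      rfl
    · rw [dif_neg h]
      have hz : z.1 = 0 ∧ 0 ≤ z.2 := not_not.mp h
      have hd : den 0 z = 0 := by
        rw [den_eq_zero_iff]
        refine ⟨?_, hz.2⟩
        rw [hz.1]
        exact rho_zero_zero
      have he : Fbar ((⟨0, by norm_num⟩ : ↥(Icc (0:ℝ) 1)), OnePoint.some z)
          = OnePoint.infty := by
        rw [Fbar_coe, if_pos hd]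
      rw [he]
      rfl
  · intro f; rfl
  · intro f
    ext z
    show Hfun f ⟨1, by norm_num⟩ z = f z
    rw [Hfun_apply]
    have h1 : rho 1 z.1 = 0 := by
      rw [rho]; simp
    have hd : den 1 z ≠ 0 := by
      rw [Ne, den_eq_zero_iff, h1]
      simp
    have hG : Gmap 1 z = z := by
      rw [Gmap, h1]
      simp
    rw [Fbar_coe, if_neg hd, hG]
    rfl
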